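/- Let X be a finite nonempty index set and m, n ≥ 1. For each i ∈ X let ρ_i be a density matrix on Fin m and let P_i be a positive semidefinite matrix on Fin n, with ∑_{i ∈ X} P_i = I_n. Then the matrix (I_m ⊗ I_n) − ∑_{i ∈ X} ρ_i ⊗ P_iᵀ is positive semidefinite; that is, the largest eigenvalue of the Choi matrix C = ∑_{i ∈ X} ρ_i ⊗ P_iᵀ of any measure-and-prepare channel is at most 1. -/

import Mathlib

open Matrix
open scoped Kronecker ComplexOrder

lemma kronecker_conjTranspose' {k l : ℕ} (A : Matrix (Fin k) (Fin k) ℂ)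
    (B : Matrix (Fin l) (Fin l) ℂ) : (A ⊗ₖ B)ᴴ = Aᴴ ⊗ₖ Bᴴ := by
  ext ⟨i1, i2⟩ ⟨j1, j2⟩
  simp [conjTranspose_apply, kronecker_apply, mul_comm]

lemma posSemidef_kronecker {k l : ℕ} {A : Matrix (Fin k) (Fin k) ℂ}
    {B : Matrix (Fin l) (Fin l) ℂ} (hA : A.PosSemidef) (hB : B.PosSemidef) :
    (A ⊗ₖ B).PosSemidef := by
  have hsq : ∀ {r : ℕ} {M : Matrix (Fin r) (Fin r) ℂ}, M.PosSemidef →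
      ∃ C : Matrix (Fin r) (Fin r) ℂ, M = Cᴴ * C := by
    intro r M hM
    open scoped MatrixOrder in
    obtain ⟨C, hC, -, h⟩ := CFC.exists_sqrt_of_isSelfAdjoint_of_quasispectrumRestricts
      hM.isHermitian (QuasispectrumRestricts.nnreal_of_nonneg hM.nonneg)
    refine ⟨C, ?_⟩
    rw [← Matrix.star_eq_conjTranspose, hC.star_eq]
    exact h.symm
  obtain ⟨C, rfl⟩ := hsq hA
  obtain ⟨D, rfl⟩ := hsq hB
  rw [Matrix.mul_kronecker_mul, ← kronecker_conjTranspose']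
  exact Matrix.posSemidef_conjTranspose_mul_self _

lemma trace_eq_sum_eigenvalues' {k : ℕ} {A : Matrix (Fin k) (Fin k) ℂ}
    (hA : A.IsHermitian) : A.trace = ∑ i, (hA.eigenvalues i : ℂ) := by
  conv_lhs => rw [hA.spectral_theorem, Unitary.conjStarAlgAut_apply]
  rw [Matrix.trace_mul_cycle,
    (Matrix.mem_unitaryGroup_iff').mp (hA.eigenvectorUnitary).2, Matrix.one_mul,
    Matrix.trace_diagonal]
  simp

lemma one_sub_posSemidef {k : ℕ} {A : Matrix (Fin k) (Fin k) ℂ}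
    (hA : A.PosSemidef) (htr : A.trace = 1) : (1 - A).PosSemidef := by
  have hH := hA.isHermitian
  have heig : ∀ i, hH.eigenvalues i ≤ 1 := by
    intro i
    have h := trace_eq_sum_eigenvalues' hH
    rw [htr] at h
    have hsum : ∑ j, hH.eigenvalues j = 1 := by exact_mod_cast h.symm
    calc hH.eigenvalues i ≤ ∑ j, hH.eigenvalues j :=
          Finset.single_le_sum (fun j _ => hA.eigenvalues_nonneg j) (Finset.mem_univ i)
      _ = 1 := hsum
  have h1 : (1 : Matrix (Fin k) (Fin k) ℂ) - A =
      (hH.eigenvectorUnitary : Matrix (Fin k) (Fin k) ℂ) *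
        (1 - Matrix.diagonal (RCLike.ofReal ∘ hH.eigenvalues)) *
        (hH.eigenvectorUnitary : Matrix (Fin k) (Fin k) ℂ)ᴴ := by
    rw [Matrix.mul_sub, Matrix.sub_mul, Matrix.mul_one]
    congr 1
    · rw [← Matrix.star_eq_conjTranspose]
      exact ((Matrix.mem_unitaryGroup_iff).mp (hH.eigenvectorUnitary).2).symm
    · simpa [Matrix.star_eq_conjTranspose] using hH.spectral_theorem
  rw [h1]
  apply Matrix.PosSemidef.mul_mul_conjTranspose_same
  have hd : (1 : Matrix (Fin k) (Fin k) ℂ) - Matrix.diagonal (RCLike.ofReal ∘ hH.eigenvalues) =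
      Matrix.diagonal (fun i => (1 : ℂ) - (hH.eigenvalues i : ℂ)) := by
    rw [← Matrix.diagonal_one, Matrix.diagonal_sub]
    rfl
  rw [hd]
  refine Matrix.posSemidef_diagonal_iff.mpr fun i => ?_
  rw [Complex.le_def]
  constructor
  · simpa using heig i
  · simp

/-- The Choi matrix of a measure-and-prepare channel has largest eigenvalue at most 1. -/
theorem measure_prepare_choi_le_one (X : Type) [Fintype X] [Nonempty X]
    (m n : ℕ) (hm : 1 ≤ m) (hn : 1 ≤ n)
    (ρ : X → Matrix (Fin m) (Fin m) ℂ)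
    (hρ : ∀ i, (ρ i).PosSemidef) (hρtr : ∀ i, (ρ i).trace = 1)
    (P : X → Matrix (Fin n) (Fin n) ℂ)
    (hP : ∀ i, (P i).PosSemidef) (hPsum : ∑ i, P i = 1) :
    ((1 : Matrix (Fin m × Fin n) (Fin m × Fin n) ℂ) - ∑ i, ρ i ⊗ₖ (P i)ᵀ).PosSemidef := by
  have hone : (1 : Matrix (Fin m × Fin n) (Fin m × Fin n) ℂ) =
      ∑ i, (1 : Matrix (Fin m) (Fin m) ℂ) ⊗ₖ (P i)ᵀ := by
    have hsk : ∑ i, (1 : Matrix (Fin m) (Fin m) ℂ) ⊗ₖ (P i)ᵀ =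
        (1 : Matrix (Fin m) (Fin m) ℂ) ⊗ₖ (∑ i, (P i)ᵀ) := by
      ext ⟨a, b⟩ ⟨c, d⟩
      simp [kronecker_apply, Finset.mul_sum, Matrix.sum_apply]
    rw [hsk, ← Matrix.transpose_sum, hPsum, Matrix.transpose_one, Matrix.one_kronecker_one]
  rw [hone, ← Finset.sum_sub_distrib]
  have hterm : ∀ i : X, ((1 : Matrix (Fin m) (Fin m) ℂ) ⊗ₖ (P i)ᵀ - ρ i ⊗ₖ (P i)ᵀ).PosSemidef := by
    intro i
    have : (1 : Matrix (Fin m) (Fin m) ℂ) ⊗ₖ (P i)ᵀ - ρ i ⊗ₖ (P i)ᵀ =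
        ((1 : Matrix (Fin m) (Fin m) ℂ) - ρ i) ⊗ₖ (P i)ᵀ := by
      ext ⟨a, b⟩ ⟨c, d⟩
      simp [kronecker_apply, sub_mul, Matrix.sub_apply]
    rw [this]
    exact posSemidef_kronecker (one_sub_posSemidef (hρ i) (hρtr i)) ((hP i).transpose)
  exact Finset.sum_induction _ _ (fun a b ha hb => ha.add hb) Matrix.PosSemidef.zero
    (fun i _ => hterm i)
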